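/- Let α, β be real numbers with 3 + α - β ≠ 0, and define α.β = (α+β)/2 + (Δ_β - Δ_α)/(3 + α - β) where Δ_α = (1 - 1/r_α²)/2 and Δ_β = (1 - 1/r_β²)/2 for positive reals r_α, r_β. If P(x) = (x² + 3x + 2)/2 and P(α - β) = Δ_α + Δ_β, then setting r_{α.β} = r_α r_β (3 + α - β), the identities (α.β) - α = 1/(r_α²(3 + α - β)) and β - (α.β) = 1/(r_β²(3 + α - β)) hold. -/

import Mathlib

/-- With Δ_α = (1-1/r_α²)/2, Δ_β = (1-1/r_β²)/2 for positive reals r_α, r_β,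
P(x) = (x²+3x+2)/2, and assuming 3+α-β ≠ 0 and P(α-β) = Δ_α + Δ_β, the
product α.β = (α+β)/2 + (Δ_β-Δ_α)/(3+α-β) satisfies
(α.β) - α = 1/(r_α²(3+α-β)) and β - (α.β) = 1/(r_β²(3+α-β)). -/
theorem stmt7 (α β rα rβ : ℝ) (hrα : 0 < rα) (hrβ : 0 < rβ)
    (h : 3 + α - β ≠ 0)
    (P : ℝ → ℝ) (hP : ∀ x, P x = (x ^ 2 + 3 * x + 2) / 2)
    (Δα Δβ : ℝ) (hΔα : Δα = (1 - 1 / rα ^ 2) / 2) (hΔβ : Δβ = (1 - 1 / rβ ^ 2) / 2)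
    (hrel : P (α - β) = Δα + Δβ) :
    ((α + β) / 2 + (Δβ - Δα) / (3 + α - β)) - α = 1 / (rα ^ 2 * (3 + α - β)) ∧
      β - ((α + β) / 2 + (Δβ - Δα) / (3 + α - β)) = 1 / (rβ ^ 2 * (3 + α - β)) := by
  have ha : rα ^ 2 ≠ 0 := by positivity
  have hb : rβ ^ 2 ≠ 0 := by positivity
  rw [hP] at hrel
  subst hΔα hΔβ
  have key : (3 + α - β) * (α - β) * rα ^ 2 * rβ ^ 2 = -(rβ ^ 2) - rα ^ 2 := by
    field_simp at hrel
    linear_combination hrel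
  constructor
  · field_simp
    linear_combination (-1) * key
  · field_simp
    linear_combination (-1) * key
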